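/- Let n ≥ 1 and let w_1, …, w_k be n×n real row stochastic matrices that are additionally strictly positive on the tridiagonal band ((w_t) i j > 0 whenever |i − j| ≤ 1). If k ≥ n − 1, then the ordered product W = w_1 w_2 ⋯ w_k is simultaneously row stochastic and entrywise strictly positive: every entry of W is positive, and each row of W sums to 1. -/

import Mathlib

private lemma listProd_nonneg {n : ℕ} (L : List (Matrix (Fin n) (Fin n) ℝ))
    (h : ∀ a ∈ L, ∀ i j : Fin n, 0 ≤ a i j) :
    ∀ i j : Fin n, 0 ≤ L.prod i j := by
  induction L with
  | nil =>
    intro i j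
    simp [Matrix.one_apply]
    split <;> norm_num
  | cons a L ih =>
    intro i j
    rw [List.prod_cons, Matrix.mul_apply]
    refine Finset.sum_nonneg fun l _ => mul_nonneg ?_ ?_
    · exact h a List.mem_cons_self i l
    · exact ih (fun b hb => h b (List.mem_cons_of_mem a hb)) l j

private lemma listProd_row {n : ℕ} (L : List (Matrix (Fin n) (Fin n) ℝ))
    (h : ∀ a ∈ L, ∀ i : Fin n, ∑ j, a i j = 1) :
    ∀ i : Fin n, ∑ j, L.prod i j = 1 := by
  induction L with
  | nil => intro i; simp [Matrix.one_apply]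
  | cons a L ih =>
    intro i
    rw [List.prod_cons]
    simp only [Matrix.mul_apply]
    rw [Finset.sum_comm]
    calc ∑ l, ∑ j, a i l * L.prod l j
        = ∑ l, a i l * ∑ j, L.prod l j := by
          simp [Finset.mul_sum]
      _ = ∑ l, a i l := by
          congr 1; ext l
          rw [ih (fun b hb => h b (List.mem_cons_of_mem a hb)) l, mul_one]
      _ = 1 := h a List.mem_cons_self i

private lemma listProd_band {n : ℕ} (L : List (Matrix (Fin n) (Fin n) ℝ))
    (h0 : ∀ a ∈ L, ∀ i j : Fin n, 0 ≤ a i j)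
    (h1 : ∀ a ∈ L, ∀ i j : Fin n, |(i : ℤ) - (j : ℤ)| ≤ 1 → 0 < a i j) :
    ∀ i j : Fin n, |(i : ℤ) - (j : ℤ)| ≤ L.length → 0 < L.prod i j := by
  induction L with
  | nil =>
    intro i j hij
    simp only [List.length_nil, Nat.cast_zero] at hij
    rw [abs_le] at hij
    have : i = j := by
      apply Fin.ext
      omega
    simp [this, Matrix.one_apply]
  | cons a L ih =>
    intro i j hij
    simp only [List.length_cons, Nat.cast_add, Nat.cast_one] at hij
    rw [abs_le] at hij
    -- pick intermediate index l
    obtain ⟨l, hl1, hl2⟩ : ∃ l : Fin n, |(i : ℤ) - (l : ℤ)| ≤ 1 ∧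
        |(l : ℤ) - (j : ℤ)| ≤ L.length := by
      rcases lt_trichotomy (i : ℕ) (j : ℕ) with hlt | heq | hgt
      · refine ⟨⟨(i : ℕ) + 1, by omega⟩, ?_, ?_⟩ <;> simp [abs_le] <;> omega
      · exact ⟨i, by simp, by simp [abs_le]; omega⟩
      · refine ⟨⟨(i : ℕ) - 1, by omega⟩, ?_, ?_⟩ <;> simp [abs_le] <;> omega
    rw [List.prod_cons, Matrix.mul_apply]
    apply Finset.sum_pos' (fun l' _ => mul_nonneg
      (h0 a List.mem_cons_self i l')
      (listProd_nonneg L (fun b hb => h0 b (List.mem_cons_of_mem a hb)) l' j))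
    refine ⟨l, Finset.mem_univ l, mul_pos ?_ ?_⟩
    · exact h1 a List.mem_cons_self i l hl1
    · exact ih (fun b hb => h0 b (List.mem_cons_of_mem a hb))
        (fun b hb => h1 b (List.mem_cons_of_mem a hb)) l j hl2

/-- If `n ≥ 1` and each `w t` is row stochastic (nonnegative
entries, rows summing to 1) and strictly positive on the tridiagonal band
(`w t i j > 0` whenever `|i − j| ≤ 1`), and `k ≥ n − 1`, then the ordered
product `W = w 0 * ⋯ * w (k-1)` is simultaneously entrywise strictly positive
and row stochastic: every entry of `W` is positive and each row of `W` sums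
to 1. -/
theorem prod_tridiagonal_row_stochastic_dense (n k : ℕ) (hn : 1 ≤ n)
    (hk : n - 1 ≤ k) (w : Fin k → Matrix (Fin n) (Fin n) ℝ)
    (h_nonneg : ∀ t (i j : Fin n), 0 ≤ w t i j)
    (h_row : ∀ t (i : Fin n), ∑ j, w t i j = 1)
    (h_band_pos : ∀ t (i j : Fin n), |(i : ℤ) - (j : ℤ)| ≤ 1 → 0 < w t i j) :
    (∀ i j : Fin n, 0 < (List.ofFn w).prod i j) ∧
      (∀ i : Fin n, ∑ j, (List.ofFn w).prod i j = 1) := by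
  have hmem : ∀ a ∈ List.ofFn w, ∃ t, w t = a := by
    intro a ha
    rw [List.mem_ofFn] at ha
    exact ha
  constructor
  · intro i j
    apply listProd_band
    · intro a ha i' j'
      obtain ⟨t, rfl⟩ := hmem a ha
      exact h_nonneg t i' j'
    · intro a ha i' j' h'
      obtain ⟨t, rfl⟩ := hmem a ha
      exact h_band_pos t i' j' h'
    · rw [List.length_ofFn, abs_le]
      have hi := i.isLt
      have hj := j.isLt
      omega
  · intro i
    apply listProd_row
    intro a ha i'
    obtain ⟨t, rfl⟩ := hmem a ha
    exact h_row t i'
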